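/- Let M ∈ ℝ^{m×d} be a Gaussian random matrix, let x ∈ ℝ^d and y ∈ ℝ^m, and let x, x' ∈ S^{d−1}, y, y' ∈ S^{m−1}. Define the Gaussian processes X_{x,y} = ⟨Mx, y⟩ and Y_{x,y} = (1/√A)⟨g, Ωx⟩ + ⟨h, y⟩, where g ∈ ℝ^p, h ∈ ℝ^m are independent standard Gaussian vectors and Ω is a frame with lower bound A. Then E|X_{x,y} − X_{x',y'}|² ≤ E|Y_{x,y} − Y_{x',y'}|² for all such pairs, with equality when x = x'. -/

import Mathlib

open MeasureTheory ProbabilityTheory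

noncomputable section

def l2 {n : ℕ} (v : Fin n → ℝ) : ℝ := Real.sqrt (∑ i, (v i) ^ 2)

def dot {n : ℕ} (u v : Fin n → ℝ) : ℝ := ∑ i, u i * v i

def mulVec' {m d : ℕ} (M : Fin m → Fin d → ℝ) (x : Fin d → ℝ) : Fin m → ℝ :=
  fun i => ∑ j, M i j * x j

def stdGaussian (n : ℕ) : Measure (Fin n → ℝ) :=
  Measure.pi (fun _ => gaussianReal 0 1)

def stdGaussianMatrix (m d : ℕ) : Measure (Fin m → Fin d → ℝ) :=
  Measure.pi (fun _ => stdGaussian d)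

instance (n : ℕ) : IsProbabilityMeasure (stdGaussian n) := by
  unfold _root_.stdGaussian; infer_instance

instance (m d : ℕ) : IsProbabilityMeasure (stdGaussianMatrix m d) := by
  unfold stdGaussianMatrix; infer_instance


variable {ι E : Type*} [Fintype ι] [DecidableEq ι] [MeasurableSpace E]

lemma pi_integral_prod (μ : Measure E) [SigmaFinite μ] (f : ι → E → ℝ) :
    ∫ x : ι → E, ∏ i, f i (x i) ∂Measure.pi (fun _ => μ) = ∏ i, ∫ e, f i e ∂μ := by
  letI : MeasureSpace E := ⟨μ⟩
  exact MeasureTheory.integral_fintype_prod_eq_prod f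

lemma pi_integrable_prod (μ : Measure E) [SigmaFinite μ] {f : ι → E → ℝ}
    (hf : ∀ i, Integrable (f i) μ) :
    Integrable (fun x : ι → E => ∏ i, f i (x i)) (Measure.pi (fun _ => μ)) := by
  letI : MeasureSpace E := ⟨μ⟩
  exact MeasureTheory.Integrable.fintype_prod hf

lemma pi_two (μ : Measure E) [IsProbabilityMeasure μ] {h k : E → ℝ}
    (hh : Integrable h μ) (hk : Integrable k μ) (hhk : Integrable (fun e => h e * k e) μ)
    (a b : ι) :
    Integrable (fun x : ι → E => h (x a) * k (x b)) (Measure.pi (fun _ => μ)) ∧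
      ∫ x : ι → E, h (x a) * k (x b) ∂Measure.pi (fun _ => μ)
        = if a = b then ∫ e, h e * k e ∂μ else (∫ e, h e ∂μ) * (∫ e, k e ∂μ) := by
  set g : ι → E → ℝ := fun i e => (if i = a then h e else 1) * (if i = b then k e else 1) with hg
  have hfun : (fun x : ι → E => h (x a) * k (x b)) = fun x => ∏ i, g i (x i) := by
    funext x
    simp only [hg, Finset.prod_mul_distrib]
    rw [Finset.prod_ite_eq' Finset.univ a (fun i => h (x i)),
        Finset.prod_ite_eq' Finset.univ b (fun i => k (x i))]
    simp
  have hgint : ∀ i, Integrable (g i) μ := by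
    intro i
    rcases eq_or_ne i a with rfl | hia
    · rcases eq_or_ne i b with rfl | hib
      · simpa [hg] using hhk
      · simpa [hg, hib] using hh
    · rcases eq_or_ne i b with rfl | hib
      · simpa [hg, hia] using hk
      · simpa [hg, hia, hib] using (integrable_const (1:ℝ))
  constructor
  · rw [hfun]; exact pi_integrable_prod μ hgint
  · rw [hfun, pi_integral_prod μ g]
    by_cases hab : a = b
    · subst hab
      rw [if_pos rfl]
      rw [Finset.prod_eq_single a (fun i _ hi => ?_) (by simp)]
      · congr 1; funext e; simp [hg]
      · have : g i = fun _ => 1 := by funext e; simp [hg, hi]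
        rw [this]; simp
    · rw [if_neg hab]
      rw [← Finset.prod_subset (Finset.subset_univ {a, b}) (fun i _ hi => ?_)]
      · rw [Finset.prod_pair (fun hc => hab hc)]
        have ha' : g a = h := by funext e; simp [hg, hab]
        have hb' : g b = k := by funext e; simp [hg, Ne.symm hab]
        rw [ha', hb']
      · simp only [Finset.mem_insert, Finset.mem_singleton, not_or] at hi
        have : g i = fun _ => 1 := by funext e; simp [hg, hi.1, hi.2]
        rw [this]; simp

lemma pi_one (μ : Measure E) [IsProbabilityMeasure μ] {h : E → ℝ} (hh : Integrable h μ) (a : ι) :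
    Integrable (fun x : ι → E => h (x a)) (Measure.pi (fun _ => μ)) ∧
      ∫ x : ι → E, h (x a) ∂Measure.pi (fun _ => μ) = ∫ e, h e ∂μ := by
  have := pi_two μ hh (integrable_const (1:ℝ)) (by simpa using hh) a a
  simp only [mul_one, if_pos rfl] at this
  exact this

lemma pi_sum_sq (μ : Measure E) [IsProbabilityMeasure μ] {f : ι → E → ℝ}
    (hf1 : ∀ i, Integrable (f i) μ)
    (hf2 : ∀ i j, Integrable (fun e => f i e * f j e) μ)
    (hmean : ∀ i, ∫ e, f i e ∂μ = 0) :
    ∫ x : ι → E, (∑ i, f i (x i)) ^ 2 ∂Measure.pi (fun _ => μ) = ∑ i, ∫ e, f i e ^ 2 ∂μ := by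
  have hfun : (fun x : ι → E => (∑ i, f i (x i)) ^ 2)
      = fun x => ∑ i, ∑ j, f i (x i) * f j (x j) := by
    funext x; rw [sq, Finset.sum_mul_sum]
  have hint : ∀ i j, Integrable (fun x : ι → E => f i (x i) * f j (x j))
      (Measure.pi (fun _ => μ)) := fun i j => (pi_two μ (hf1 i) (hf1 j) (hf2 i j) i j).1
  rw [hfun, integral_finset_sum _ (fun i _ => integrable_finset_sum _ (fun j _ => hint i j))]
  have h2 : ∀ i ∈ Finset.univ, (∫ x : ι → E, ∑ j, f i (x i) * f j (x j)
        ∂Measure.pi (fun _ => μ)) = ∫ e, f i e ^ 2 ∂μ := by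
    intro i _
    rw [integral_finset_sum _ (fun j _ => hint i j)]
    have h3 : ∀ j ∈ Finset.univ, (∫ x : ι → E, f i (x i) * f j (x j) ∂Measure.pi (fun _ => μ))
        = if i = j then ∫ e, f i e ^ 2 ∂μ else 0 := by
      intro j _
      rw [(pi_two μ (hf1 i) (hf1 j) (hf2 i j) i j).2]
      by_cases hij : i = j
      · subst hij; simp only [if_pos rfl]; exact integral_congr_ae (Filter.Eventually.of_forall fun e => (sq (f i e)).symm)
      · simp [hij, hmean i]
    rw [Finset.sum_congr rfl h3]
    simp
  rw [Finset.sum_congr rfl h2]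

open Real in
lemma gauss_pdf_eq (t : ℝ) :
    gaussianPDFReal 0 1 t = (Real.sqrt (2 * π))⁻¹ * Real.exp (-2⁻¹ * t ^ 2) := by
  unfold gaussianPDFReal
  simp only [NNReal.coe_one, mul_one, sub_zero]
  congr 1
  ring

lemma gauss_density_eq (f : ℝ → ℝ) :
    ∫ t, f t ∂gaussianReal 0 1 = ∫ t, gaussianPDFReal 0 1 t * f t := by
  rw [gaussianReal_of_var_ne_zero 0 one_ne_zero, gaussianPDF_def]
  rw [show (fun x => ENNReal.ofReal (gaussianPDFReal 0 1 x))
      = fun x => ((Real.toNNReal (gaussianPDFReal 0 1 x) : NNReal) : ENNReal) from rfl]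
  rw [integral_withDensity_eq_integral_smul (measurable_gaussianPDFReal 0 1).real_toNNReal f]
  congr 1; funext t
  rw [NNReal.smul_def, smul_eq_mul, Real.coe_toNNReal _ (gaussianPDFReal_nonneg 0 1 t)]

lemma gauss_integrable_iff {f : ℝ → ℝ} :
    Integrable f (gaussianReal 0 1)
      ↔ Integrable (fun t => gaussianPDFReal 0 1 t * f t) volume := by
  rw [gaussianReal_of_var_ne_zero 0 one_ne_zero, gaussianPDF_def]
  rw [show (fun x => ENNReal.ofReal (gaussianPDFReal 0 1 x))
      = fun x => ((Real.toNNReal (gaussianPDFReal 0 1 x) : NNReal) : ENNReal) from rfl]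
  rw [integrable_withDensity_iff_integrable_smul (measurable_gaussianPDFReal 0 1).real_toNNReal]
  constructor <;> intro hint <;> refine hint.congr (Filter.Eventually.of_forall fun t => ?_) <;>
    simp only [NNReal.smul_def, smul_eq_mul, Real.coe_toNNReal _ (gaussianPDFReal_nonneg 0 1 t)]

open Real in
lemma gauss_integrable_id : Integrable (fun t : ℝ => t) (gaussianReal 0 1) := by
  rw [gauss_integrable_iff]
  have : (fun t : ℝ => gaussianPDFReal 0 1 t * t)
      = fun t => (Real.sqrt (2 * π))⁻¹ * (t * Real.exp (-2⁻¹ * t ^ 2)) := by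
    funext t; rw [gauss_pdf_eq]; ring
  rw [this]
  exact (integrable_mul_exp_neg_mul_sq (by norm_num : (0:ℝ) < 2⁻¹)).const_mul _

open Real in
lemma gauss_integrable_mul_self : Integrable (fun t : ℝ => t * t) (gaussianReal 0 1) := by
  rw [gauss_integrable_iff]
  have h2 : Integrable (fun t : ℝ => t ^ (2:ℝ) * Real.exp (-2⁻¹ * t ^ 2)) volume :=
    integrable_rpow_mul_exp_neg_mul_sq (by norm_num) (by norm_num)
  have : (fun t : ℝ => gaussianPDFReal 0 1 t * (t * t))
      = fun t => (Real.sqrt (2 * π))⁻¹ * (t ^ (2:ℝ) * Real.exp (-2⁻¹ * t ^ 2)) := by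
    funext t
    rw [gauss_pdf_eq, show ((2:ℝ)) = ((2:ℕ):ℝ) by norm_num, Real.rpow_natCast]
    ring
  rw [this]
  exact h2.const_mul _

open Real in
lemma gauss_integral_id : ∫ t, t ∂gaussianReal 0 1 = 0 := by
  have h1 : ((⟨(-1:ℝ)^2, sq_nonneg _⟩ : NNReal) * 1) = (1 : NNReal) := by
    ext; norm_num
  have hmap : (gaussianReal 0 1).map (fun t : ℝ => (-1 : ℝ) * t) = gaussianReal 0 1 := by
    have := gaussianReal_map_const_mul (μ := 0) (v := 1) (-1 : ℝ)
    rw [mul_zero] at this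
    convert this using 2
    ext; norm_num
  have h2 : ∫ t, t ∂((gaussianReal 0 1).map (fun t : ℝ => (-1:ℝ) * t))
      = ∫ t, (-1:ℝ) * t ∂gaussianReal 0 1 :=
    integral_map (by fun_prop) measurable_id.aestronglyMeasurable
  rw [hmap] at h2
  simp only [neg_one_mul] at h2
  rw [integral_neg] at h2
  linarith

open Real in
lemma gauss_J : ∫ t : ℝ, t ^ 2 * Real.exp (-2⁻¹ * t ^ 2) = Real.sqrt (2 * π) := by
  have habs : ∫ t : ℝ, t ^ 2 * Real.exp (-2⁻¹ * t ^ 2)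
      = 2 * ∫ t in Set.Ioi (0:ℝ), t ^ 2 * Real.exp (-2⁻¹ * t ^ 2) := by
    rw [← integral_comp_abs (f := fun s : ℝ => s ^ 2 * Real.exp (-2⁻¹ * s ^ 2))]
    congr 1; funext t; simp [sq_abs]
  rw [habs]
  have hioi : ∫ t in Set.Ioi (0:ℝ), t ^ 2 * Real.exp (-2⁻¹ * t ^ 2)
      = ∫ t in Set.Ioi (0:ℝ), t ^ (2:ℝ) * Real.exp (-2⁻¹ * t ^ (2:ℝ)) := by
    refine setIntegral_congr_fun measurableSet_Ioi fun t _ => ?_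
    rw [show ((2:ℝ)) = ((2:ℕ):ℝ) by norm_num, Real.rpow_natCast]
  rw [hioi, integral_rpow_mul_exp_neg_mul_rpow (by norm_num) (by norm_num) (by norm_num)]
  have hgamma : Real.Gamma (((2:ℝ) + 1) / 2) = Real.sqrt π / 2 := by
    rw [show (((2:ℝ) + 1) / 2) = 1/2 + 1 by norm_num, Real.Gamma_add_one (by norm_num)]
    rw [Real.Gamma_one_half_eq]; ring
  rw [hgamma]
  have hb : ((2:ℝ)⁻¹) ^ (-((2:ℝ) + 1) / 2) = 2 * Real.sqrt 2 := by
    rw [show (-((2:ℝ) + 1) / 2) = -(3/2) by norm_num]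
    rw [Real.rpow_neg (by norm_num), Real.inv_rpow (by norm_num), inv_inv]
    rw [show ((3:ℝ)/2) = 1 + 1/2 by norm_num, Real.rpow_add (by norm_num), Real.rpow_one]
    rw [← Real.sqrt_eq_rpow]
  rw [hb, Real.sqrt_mul (by norm_num)]
  ring

open Real in
lemma gauss_integral_sq : ∫ t : ℝ, t ^ 2 ∂gaussianReal 0 1 = 1 := by
  rw [gauss_density_eq]
  have : (fun t : ℝ => gaussianPDFReal 0 1 t * t ^ 2)
      = fun t => (Real.sqrt (2 * π))⁻¹ * (t ^ 2 * Real.exp (-2⁻¹ * t ^ 2)) := by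
    funext t; rw [gauss_pdf_eq]; ring
  rw [this, integral_const_mul, gauss_J]
  rw [inv_mul_cancel₀ (by positivity)]

variable {n : ℕ}

lemma integrable_dot (c : Fin n → ℝ) :
    Integrable (fun z : Fin n → ℝ => dot z c) (stdGaussian n) := by
  unfold dot _root_.stdGaussian
  exact integrable_finset_sum _ fun j _ =>
    (pi_one (gaussianReal 0 1) (gauss_integrable_id.mul_const (c j)) j).1

lemma integral_dot (c : Fin n → ℝ) : ∫ z, dot z c ∂stdGaussian n = 0 := by
  unfold dot _root_.stdGaussian
  rw [integral_finset_sum _ (fun j _ =>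
    (pi_one (gaussianReal 0 1) (gauss_integrable_id.mul_const (c j)) j).1)]
  refine Finset.sum_eq_zero fun j _ => ?_
  rw [(pi_one (gaussianReal 0 1) (gauss_integrable_id.mul_const (c j)) j).2,
    integral_mul_const, gauss_integral_id, zero_mul]

lemma integrable_dot_mul (c c' : Fin n → ℝ) :
    Integrable (fun z : Fin n → ℝ => dot z c * dot z c') (stdGaussian n) := by
  have hfun : (fun z : Fin n → ℝ => dot z c * dot z c')
      = fun z => ∑ a : Fin n, ∑ b : Fin n, (c a * c' b) * (z a * z b) := by
    funext z; unfold dot; rw [Finset.sum_mul_sum]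
    exact Finset.sum_congr rfl fun a _ => Finset.sum_congr rfl fun b _ => by ring
  rw [hfun]; unfold _root_.stdGaussian
  exact integrable_finset_sum _ fun a _ => integrable_finset_sum _ fun b _ =>
    ((pi_two (gaussianReal 0 1) gauss_integrable_id gauss_integrable_id
      gauss_integrable_mul_self a b).1).const_mul _

lemma integral_dot_sq (c : Fin n → ℝ) :
    ∫ z, dot z c ^ 2 ∂stdGaussian n = ∑ j, c j ^ 2 := by
  unfold dot _root_.stdGaussian
  have hf1 : ∀ j : Fin n, Integrable (fun t : ℝ => t * c j) (gaussianReal 0 1) :=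
    fun j => gauss_integrable_id.mul_const (c j)
  have hf2 : ∀ i j : Fin n, Integrable (fun t : ℝ => (t * c i) * (t * c j))
      (gaussianReal 0 1) := by
    intro i j
    have : (fun t : ℝ => (t * c i) * (t * c j)) = fun t => (c i * c j) * (t * t) := by
      funext t; ring
    rw [this]; exact gauss_integrable_mul_self.const_mul _
  have hmean : ∀ j : Fin n, ∫ t, t * c j ∂gaussianReal 0 1 = 0 := fun j => by
    rw [integral_mul_const, gauss_integral_id, zero_mul]
  rw [pi_sum_sq (gaussianReal 0 1) (f := fun j t => t * c j) hf1 hf2 hmean]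
  refine Finset.sum_congr rfl fun j _ => ?_
  have : (fun t : ℝ => (t * c j) ^ 2) = fun t => t ^ 2 * c j ^ 2 := by funext t; ring
  rw [this, integral_mul_const, gauss_integral_sq, one_mul]

lemma integral_matrix_sum_sq {m d : ℕ} (c : Fin m → Fin d → ℝ) :
    ∫ M, (∑ i, dot (M i) (c i)) ^ 2 ∂stdGaussianMatrix m d = ∑ i, ∑ j, c i j ^ 2 := by
  unfold stdGaussianMatrix
  rw [pi_sum_sq (stdGaussian d) (f := fun i w => dot w (c i))
    (fun i => integrable_dot (c i)) (fun i j => integrable_dot_mul (c i) (c j))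
    (fun i => integral_dot (c i))]
  exact Finset.sum_congr rfl fun i _ => integral_dot_sq (c i)

lemma prod_second_moment {pp mm : ℕ} (cA : Fin pp → ℝ) (cB : Fin mm → ℝ) :
    ∫ gh : (Fin pp → ℝ) × (Fin mm → ℝ), (dot gh.1 cA + dot gh.2 cB) ^ 2
      ∂((stdGaussian pp).prod (stdGaussian mm))
    = (∑ k, cA k ^ 2) + ∑ i, cB i ^ 2 := by
  have Iaa : Integrable (fun gh : (Fin pp → ℝ) × (Fin mm → ℝ) => dot gh.1 cA * dot gh.1 cA)
      ((stdGaussian pp).prod (stdGaussian mm)) := by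
    simpa using (integrable_dot_mul cA cA).mul_prod (integrable_const (1:ℝ))
  have Ibb : Integrable (fun gh : (Fin pp → ℝ) × (Fin mm → ℝ) => dot gh.2 cB * dot gh.2 cB)
      ((stdGaussian pp).prod (stdGaussian mm)) := by
    simpa using (integrable_const (1:ℝ)).mul_prod (integrable_dot_mul cB cB)
  have Iab : Integrable (fun gh : (Fin pp → ℝ) × (Fin mm → ℝ) => dot gh.1 cA * dot gh.2 cB)
      ((stdGaussian pp).prod (stdGaussian mm)) :=
    (integrable_dot cA).mul_prod (integrable_dot cB)
  have expand : (fun gh : (Fin pp → ℝ) × (Fin mm → ℝ) => (dot gh.1 cA + dot gh.2 cB) ^ 2)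
      = fun gh => dot gh.1 cA * dot gh.1 cA
          + (2 * (dot gh.1 cA * dot gh.2 cB) + dot gh.2 cB * dot gh.2 cB) := by
    funext gh; ring
  have I2 : Integrable (fun gh : (Fin pp → ℝ) × (Fin mm → ℝ) =>
      2 * (dot gh.1 cA * dot gh.2 cB) + dot gh.2 cB * dot gh.2 cB)
      ((stdGaussian pp).prod (stdGaussian mm)) := (Iab.const_mul 2).add Ibb
  have I1 : Integrable (fun gh : (Fin pp → ℝ) × (Fin mm → ℝ) =>
      2 * (dot gh.1 cA * dot gh.2 cB)) ((stdGaussian pp).prod (stdGaussian mm)) :=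
    Iab.const_mul 2
  rw [expand, integral_add Iaa I2, integral_add I1 Ibb, integral_const_mul]
  have haa : ∫ gh : (Fin pp → ℝ) × (Fin mm → ℝ), dot gh.1 cA * dot gh.1 cA
      ∂((stdGaussian pp).prod (stdGaussian mm)) = ∑ k, cA k ^ 2 := by
    have h := integral_prod_mul (μ := stdGaussian pp) (ν := stdGaussian mm)
      (f := fun g : Fin pp → ℝ => dot g cA * dot g cA) (g := fun _ : Fin mm → ℝ => (1:ℝ))
    simp only [mul_one, integral_const, measure_univ, ENNReal.toReal_one, smul_eq_mul,
      one_mul, probReal_univ] at h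
    rw [h, show (fun g : Fin pp → ℝ => dot g cA * dot g cA) = fun g => dot g cA ^ 2 from
      funext fun g => (sq (dot g cA)).symm]
    exact integral_dot_sq cA
  have hbb : ∫ gh : (Fin pp → ℝ) × (Fin mm → ℝ), dot gh.2 cB * dot gh.2 cB
      ∂((stdGaussian pp).prod (stdGaussian mm)) = ∑ i, cB i ^ 2 := by
    have h := integral_prod_mul (μ := stdGaussian pp) (ν := stdGaussian mm)
      (f := fun _ : Fin pp → ℝ => (1:ℝ)) (g := fun h : Fin mm → ℝ => dot h cB * dot h cB)
    simp only [one_mul, integral_const, measure_univ, ENNReal.toReal_one, smul_eq_mul, probReal_univ] at h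
    rw [h, show (fun h : Fin mm → ℝ => dot h cB * dot h cB) = fun h => dot h cB ^ 2 from
      funext fun h => (sq (dot h cB)).symm]
    exact integral_dot_sq cB
  have hab : ∫ gh : (Fin pp → ℝ) × (Fin mm → ℝ), dot gh.1 cA * dot gh.2 cB
      ∂((stdGaussian pp).prod (stdGaussian mm)) = 0 := by
    have h := integral_prod_mul (μ := stdGaussian pp) (ν := stdGaussian mm)
      (f := fun g : Fin pp → ℝ => dot g cA) (g := fun h : Fin mm → ℝ => dot h cB)
    rw [h, integral_dot, zero_mul]
  rw [haa, hbb, hab]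
  ring

lemma l2_sq {k : ℕ} (w : Fin k → ℝ) : l2 w ^ 2 = ∑ i, w i ^ 2 :=
  Real.sq_sqrt (Finset.sum_nonneg fun i _ => sq_nonneg _)

lemma sum_sub_sq {k : ℕ} (u u' : Fin k → ℝ) :
    ∑ j, (u j - u' j) ^ 2
      = (∑ j, u j ^ 2) - 2 * (∑ j, u j * u' j) + ∑ j, u' j ^ 2 := by
  have h1 : ∑ j, (u j - u' j) ^ 2
      = ∑ j, (u j ^ 2 - 2 * (u j * u' j) + u' j ^ 2) :=
    Finset.sum_congr rfl fun j _ => by ring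
  rw [h1, Finset.sum_add_distrib, Finset.sum_sub_distrib, ← Finset.mul_sum]

lemma double_sum_eval {m d : ℕ} (x x' : Fin d → ℝ) (y y' : Fin m → ℝ) :
    ∑ i, ∑ j, (y i * x j - y' i * x' j) ^ 2
      = (∑ i, y i ^ 2) * (∑ j, x j ^ 2)
        - 2 * ((∑ i, y i * y' i) * (∑ j, x j * x' j))
        + (∑ i, y' i ^ 2) * (∑ j, x' j ^ 2) := by
  have inner : ∀ i, ∑ j, (y i * x j - y' i * x' j) ^ 2
      = y i ^ 2 * (∑ j, x j ^ 2) - 2 * ((y i * y' i) * (∑ j, x j * x' j))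
        + y' i ^ 2 * (∑ j, x' j ^ 2) := by
    intro i
    have h1 : ∑ j, (y i * x j - y' i * x' j) ^ 2
        = ∑ j, (y i ^ 2 * x j ^ 2 - 2 * ((y i * y' i) * (x j * x' j))
            + y' i ^ 2 * x' j ^ 2) :=
      Finset.sum_congr rfl fun j _ => by ring
    rw [h1, Finset.sum_add_distrib, Finset.sum_sub_distrib, ← Finset.mul_sum,
      ← Finset.mul_sum, ← Finset.mul_sum, ← Finset.mul_sum]
  have h2 : ∑ i, ∑ j, (y i * x j - y' i * x' j) ^ 2
      = ∑ i, (y i ^ 2 * (∑ j, x j ^ 2) - 2 * ((y i * y' i) * (∑ j, x j * x' j))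
          + y' i ^ 2 * (∑ j, x' j ^ 2)) :=
    Finset.sum_congr rfl fun i _ => inner i
  rw [h2, Finset.sum_add_distrib, Finset.sum_sub_distrib, ← Finset.sum_mul, ← Finset.sum_mul,
    ← Finset.mul_sum, ← Finset.sum_mul]

theorem gaussian_process_comparison {m d p : ℕ}
    (Ω : Fin p → Fin d → ℝ) (A : ℝ) (hA : 0 < A)
    (hframe : ∀ v : Fin d → ℝ, A * (l2 v) ^ 2 ≤ (l2 (mulVec' Ω v)) ^ 2)
    (x x' : Fin d → ℝ) (hx : l2 x = 1) (hx' : l2 x' = 1)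
    (y y' : Fin m → ℝ) (hy : l2 y = 1) (hy' : l2 y' = 1) :
    (∫ M, (dot (mulVec' M x) y - dot (mulVec' M x') y') ^ 2 ∂(stdGaussianMatrix m d)) ≤
      (∫ gh : (Fin p → ℝ) × (Fin m → ℝ),
          ((1 / Real.sqrt A) * dot gh.1 (mulVec' Ω x) + dot gh.2 y -
            ((1 / Real.sqrt A) * dot gh.1 (mulVec' Ω x') + dot gh.2 y')) ^ 2
        ∂((stdGaussian p).prod (stdGaussian m))) ∧
    (x = x' →
      (∫ M, (dot (mulVec' M x) y - dot (mulVec' M x') y') ^ 2 ∂(stdGaussianMatrix m d)) =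
        (∫ gh : (Fin p → ℝ) × (Fin m → ℝ),
            ((1 / Real.sqrt A) * dot gh.1 (mulVec' Ω x) + dot gh.2 y -
              ((1 / Real.sqrt A) * dot gh.1 (mulVec' Ω x') + dot gh.2 y')) ^ 2
          ∂((stdGaussian p).prod (stdGaussian m)))) := by
  have hx2 : ∑ j, x j ^ 2 = 1 := by have h := l2_sq x; rw [hx, one_pow] at h; exact h.symm
  have hx'2 : ∑ j, x' j ^ 2 = 1 := by have h := l2_sq x'; rw [hx', one_pow] at h; exact h.symm
  have hy2 : ∑ i, y i ^ 2 = 1 := by have h := l2_sq y; rw [hy, one_pow] at h; exact h.symm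
  have hy'2 : ∑ i, y' i ^ 2 = 1 := by have h := l2_sq y'; rw [hy', one_pow] at h; exact h.symm
  -- LHS computation
  have hL : (∫ M, (dot (mulVec' M x) y - dot (mulVec' M x') y') ^ 2 ∂(stdGaussianMatrix m d))
      = ∑ i, ∑ j, (y i * x j - y' i * x' j) ^ 2 := by
    have hfun : (fun M : Fin m → Fin d → ℝ =>
        (dot (mulVec' M x) y - dot (mulVec' M x') y') ^ 2)
        = fun M => (∑ i, dot (M i) (fun j => y i * x j - y' i * x' j)) ^ 2 := by
      funext M
      congr 1
      unfold dot mulVec'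
      rw [← Finset.sum_sub_distrib]
      refine Finset.sum_congr rfl fun i _ => ?_
      rw [Finset.sum_mul, Finset.sum_mul, ← Finset.sum_sub_distrib]
      exact Finset.sum_congr rfl fun j _ => by ring
    rw [hfun, integral_matrix_sum_sq]
  have eL : (∫ M, (dot (mulVec' M x) y - dot (mulVec' M x') y') ^ 2 ∂(stdGaussianMatrix m d))
      = 2 - 2 * ((∑ i, y i * y' i) * (∑ j, x j * x' j)) := by
    rw [hL, double_sum_eval, hx2, hx'2, hy2, hy'2]; ring
  -- RHS computation
  have hR : (∫ gh : (Fin p → ℝ) × (Fin m → ℝ),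
        ((1 / Real.sqrt A) * dot gh.1 (mulVec' Ω x) + dot gh.2 y -
          ((1 / Real.sqrt A) * dot gh.1 (mulVec' Ω x') + dot gh.2 y')) ^ 2
      ∂((stdGaussian p).prod (stdGaussian m)))
      = (∑ k, ((1 / Real.sqrt A) * (mulVec' Ω x k - mulVec' Ω x' k)) ^ 2)
        + ∑ i, (y i - y' i) ^ 2 := by
    have hfun : (fun gh : (Fin p → ℝ) × (Fin m → ℝ) =>
        ((1 / Real.sqrt A) * dot gh.1 (mulVec' Ω x) + dot gh.2 y -
          ((1 / Real.sqrt A) * dot gh.1 (mulVec' Ω x') + dot gh.2 y')) ^ 2)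
        = fun gh => (dot gh.1 (fun k => (1 / Real.sqrt A) * (mulVec' Ω x k - mulVec' Ω x' k))
            + dot gh.2 (fun i => y i - y' i)) ^ 2 := by
      funext gh
      congr 1
      have h1 : dot gh.1 (fun k => (1 / Real.sqrt A) * (mulVec' Ω x k - mulVec' Ω x' k))
          = (1 / Real.sqrt A) * dot gh.1 (mulVec' Ω x)
            - (1 / Real.sqrt A) * dot gh.1 (mulVec' Ω x') := by
        unfold dot
        rw [Finset.mul_sum, Finset.mul_sum, ← Finset.sum_sub_distrib]
        exact Finset.sum_congr rfl fun k _ => by ring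
      have h2 : dot gh.2 (fun i => y i - y' i) = dot gh.2 y - dot gh.2 y' := by
        unfold dot
        rw [← Finset.sum_sub_distrib]
        exact Finset.sum_congr rfl fun i _ => by ring
      rw [h1, h2]; ring
    rw [hfun, prod_second_moment]
  have hu : ∀ k, mulVec' Ω x k - mulVec' Ω x' k = mulVec' Ω (x - x') k := by
    intro k
    unfold mulVec'
    rw [← Finset.sum_sub_distrib]
    exact Finset.sum_congr rfl fun j _ => by simp [Pi.sub_apply]; ring
  have eR : (∫ gh : (Fin p → ℝ) × (Fin m → ℝ),
        ((1 / Real.sqrt A) * dot gh.1 (mulVec' Ω x) + dot gh.2 y -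
          ((1 / Real.sqrt A) * dot gh.1 (mulVec' Ω x') + dot gh.2 y')) ^ 2
      ∂((stdGaussian p).prod (stdGaussian m)))
      = (1 / A) * (∑ k, (mulVec' Ω (x - x') k) ^ 2)
        + (2 - 2 * (∑ i, y i * y' i)) := by
    rw [hR]
    have h1 : ∑ k, ((1 / Real.sqrt A) * (mulVec' Ω x k - mulVec' Ω x' k)) ^ 2
        = (1 / A) * ∑ k, (mulVec' Ω (x - x') k) ^ 2 := by
      rw [Finset.mul_sum]
      refine Finset.sum_congr rfl fun k _ => ?_
      rw [hu k, mul_pow, div_pow, one_pow, Real.sq_sqrt hA.le]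
    have h2 : ∑ i, (y i - y' i) ^ 2 = 2 - 2 * (∑ i, y i * y' i) := by
      rw [sum_sub_sq y y', hy2, hy'2]; ring
    rw [h1, h2]
  have hU : A * (2 - 2 * (∑ j, x j * x' j)) ≤ ∑ k, (mulVec' Ω (x - x') k) ^ 2 := by
    have h := hframe (x - x')
    rw [l2_sq (mulVec' Ω (x - x')), l2_sq (x - x')] at h
    have h3 : ∑ j, (x - x') j ^ 2 = 2 - 2 * (∑ j, x j * x' j) := by
      have : ∀ j, (x - x') j = x j - x' j := fun j => rfl
      rw [Finset.sum_congr rfl (fun j _ => by rw [this j]), sum_sub_sq x x', hx2, hx'2]; ring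
    rw [h3] at h
    exact h
  have hS1 : (∑ j, x j * x' j) ≤ 1 := by
    have hcs := Finset.sum_mul_sq_le_sq_mul_sq Finset.univ x x'
    rw [hx2, hx'2] at hcs
    nlinarith [hcs]
  have hT1 : (∑ i, y i * y' i) ≤ 1 := by
    have hcs := Finset.sum_mul_sq_le_sq_mul_sq Finset.univ y y'
    rw [hy2, hy'2] at hcs
    nlinarith [hcs]
  constructor
  · rw [eL, eR]
    have h3 : 2 - 2 * (∑ j, x j * x' j) ≤ (1 / A) * ∑ k, (mulVec' Ω (x - x') k) ^ 2 := by
      have := mul_le_mul_of_nonneg_left hU (le_of_lt (one_div_pos.mpr hA))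
      rw [← mul_assoc, one_div, inv_mul_cancel₀ hA.ne', one_mul] at this
      rw [one_div]
      exact this
    nlinarith [mul_nonneg (sub_nonneg.mpr hS1) (sub_nonneg.mpr hT1)]
  · intro hxe
    subst hxe
    have hSeq : (∑ j, x j * x j) = 1 := by
      rw [Finset.sum_congr rfl (fun j _ => (sq (x j)).symm), hx2]
    have hUeq : ∑ k, (mulVec' Ω (x - x) k) ^ 2 = 0 := by
      simp [mulVec']
    rw [eL, eR, hSeq, hUeq]
    ring
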